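/- Let T : ℝ≥0 → ℝ be a measurable function with |T(t)| ≤ CM/(1 + |μ| t^α) for constants C, M > 0, μ < 0, α > 1, and let x : ℝ≥0 → E be a bounded continuous S-asymptotically ω-periodic function into a Banach space E. Then the convolution Γ(t) = ∫₀ᵗ T(t-s) x(s) ds is S-asymptotically ω-periodic, i.e., ‖Γ(t+ω) - Γ(t)‖ → 0 as t → ∞. -/

import Mathlib

open Filter MeasureTheory

theorem stmt_3 {E : Type*} [NormedAddCommGroup E] [NormedSpace ℝ E] [CompleteSpace E]
    (ω : ℝ) (hω : 0 < ω) (T : ℝ → ℝ) (hTmeas : Measurable T)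
    (C M μ α : ℝ) (hC : 0 < C) (hM : 0 < M) (hμ : μ < 0) (hα : 1 < α)
    (hT : ∀ t : ℝ, 0 ≤ t → |T t| ≤ C * M / (1 + |μ| * t ^ α))
    (x : ℝ → E) (hxc : Continuous x) (hxbd : Bornology.IsBounded (Set.range x))
    (hx : Tendsto (fun t : ℝ => ‖x (t + ω) - x t‖) atTop (nhds 0)) :
    Tendsto (fun t : ℝ =>
      ‖(∫ s in (0:ℝ)..(t + ω), T (t + ω - s) • x s) - ∫ s in (0:ℝ)..t, T (t - s) • x s‖)
      atTop (nhds 0) := by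
  have hK : 0 < C * M := mul_pos hC hM
  set K := C * M with hKdef
  have hμ0 : 0 < |μ| := abs_pos.mpr hμ.ne
  have hα0 : 0 < α := lt_trans one_pos hα
  set g : ℝ → ℝ := fun s => K / (1 + |μ| * s ^ α) with hgdef
  have hdenpos : ∀ s : ℝ, 0 ≤ s → 0 < 1 + |μ| * s ^ α := by
    intro s hs
    have : 0 ≤ |μ| * s ^ α := mul_nonneg hμ0.le (Real.rpow_nonneg hs α)
    linarith
  have hgK : ∀ s : ℝ, 0 ≤ s → g s ≤ K := by
    intro s hs
    have h1 : (1:ℝ) ≤ 1 + |μ| * s ^ α := by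
      have : 0 ≤ |μ| * s ^ α := mul_nonneg hμ0.le (Real.rpow_nonneg hs α)
      linarith
    calc g s ≤ K / 1 := by
          apply div_le_div_of_nonneg_left hK.le one_pos h1
      _ = K := div_one K
  have hTK : ∀ r : ℝ, 0 ≤ r → |T r| ≤ K := fun r hr => (hT r hr).trans (hgK r hr)
  have hg_nonneg : ∀ s : ℝ, 0 ≤ s → 0 ≤ g s := fun s hs =>
    div_nonneg hK.le (hdenpos s hs).le
  have hg_anti : ∀ a b : ℝ, 0 ≤ a → a ≤ b → g b ≤ g a := by
    intro a b ha hab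
    have hb : 0 ≤ b := ha.trans hab
    have h1 : a ^ α ≤ b ^ α := Real.rpow_le_rpow ha hab hα0.le
    apply div_le_div_of_nonneg_left hK.le (hdenpos a ha)
    nlinarith [hμ0.le]
  have hg0 : Tendsto g atTop (nhds 0) := by
    have h1 : Tendsto (fun s : ℝ => 1 + |μ| * s ^ α) atTop atTop :=
      tendsto_atTop_add_const_left atTop 1 ((tendsto_rpow_atTop hα0).const_mul_atTop hμ0)
    exact tendsto_const_nhds.div_atTop h1
  -- integrability of g on Ici 0
  have hg_meas : Measurable g := by fun_prop
  have hg_int : IntegrableOn g (Set.Ici 0) := by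
    rw [← Set.Icc_union_Ioi_eq_Ici (zero_le_one)]
    apply IntegrableOn.union
    · apply Measure.integrableOn_of_bounded (M := K) measure_Icc_lt_top.ne
        hg_meas.aestronglyMeasurable
      filter_upwards [ae_restrict_mem measurableSet_Icc] with s hs
      rw [Real.norm_eq_abs, abs_of_nonneg (hg_nonneg s hs.1)]
      exact hgK s hs.1
    · have hmaj : IntegrableOn (fun s : ℝ => (K / |μ|) * s ^ (-α)) (Set.Ioi 1) :=
        (integrableOn_Ioi_rpow_of_lt (by linarith) one_pos).const_mul _
      apply Integrable.mono' hmaj hg_meas.aestronglyMeasurable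
      filter_upwards [ae_restrict_mem measurableSet_Ioi] with s hs
      have hs0 : (0:ℝ) < s := lt_trans one_pos hs
      have hsα : (0:ℝ) < s ^ α := Real.rpow_pos_of_pos hs0 α
      rw [Real.norm_eq_abs, abs_of_nonneg (hg_nonneg s hs0.le)]
      have h1 : g s ≤ K / (|μ| * s ^ α) := by
        apply div_le_div_of_nonneg_left hK.le (by positivity)
        linarith
      calc g s ≤ K / (|μ| * s ^ α) := h1
        _ = K / |μ| * s ^ (-α) := by
            rw [Real.rpow_neg hs0.le]
            field_simp
  have hT_int : IntegrableOn T (Set.Ici 0) := by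
    apply Integrable.mono' hg_int hTmeas.aestronglyMeasurable
    filter_upwards [ae_restrict_mem measurableSet_Ici] with s hs
    rw [Real.norm_eq_abs]
    exact hT s hs
  have habs : IntegrableOn (fun s => |T s|) (Set.Ici 0) := hT_int.abs
  set I := ∫ s in Set.Ici (0:ℝ), |T s| with hIdef
  have hI0 : 0 ≤ I := setIntegral_nonneg measurableSet_Ici (fun s _ => abs_nonneg _)
  have hIle : ∀ b : ℝ, 0 ≤ b → (∫ u in (0:ℝ)..b, |T u|) ≤ I := by
    intro b hb
    rw [intervalIntegral.integral_of_le hb]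
    apply setIntegral_mono_set habs (ae_of_all _ fun s => abs_nonneg _)
    exact HasSubset.Subset.eventuallyLE (fun s hs => le_of_lt hs.1)
  -- bound on x
  obtain ⟨B0, hB0⟩ := hxbd.exists_norm_le
  set B := max B0 0 with hBdef
  have hB : ∀ s : ℝ, ‖x s‖ ≤ B := fun s =>
    (hB0 (x s) (Set.mem_range_self s)).trans (le_max_left _ _)
  have hBpos : 0 ≤ B := le_max_right _ _
  -- interval integrability helper
  have hii : ∀ (t' a b B' : ℝ) (y : ℝ → E), Continuous y → (∀ s, ‖y s‖ ≤ B') →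
      (∀ s ∈ Set.uIoc a b, 0 ≤ t' - s) →
      IntervalIntegrable (fun s => T (t' - s) • y s) volume a b := by
    intro t' a b B' y hyc hyB hab
    rw [intervalIntegrable_iff]
    apply Measure.integrableOn_of_bounded (M := K * B') measure_Ioc_lt_top.ne
    · exact ((hTmeas.comp (measurable_const.sub measurable_id)).aestronglyMeasurable.smul
        hyc.aestronglyMeasurable)
    · filter_upwards [ae_restrict_mem measurableSet_uIoc] with s hs
      rw [norm_smul, Real.norm_eq_abs]
      exact mul_le_mul (hTK _ (hab s hs)) (hyB s) (norm_nonneg _) hK.le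
  have hxω : Continuous (fun s : ℝ => x (s + ω)) := hxc.comp (continuous_id.add continuous_const)
  -- main ε argument
  rw [← tendsto_zero_iff_norm_tendsto_zero, NormedAddCommGroup.tendsto_nhds_zero]
  intro ε hε
  set ε' := ε / (3 * (I + 1)) with hε'def
  have hε' : 0 < ε' := by positivity
  obtain ⟨R₀, hR₀⟩ := (Metric.tendsto_atTop.mp hx) ε' hε'
  set R := max R₀ 0 with hRdef
  have hR0 : (0:ℝ) ≤ R := le_max_right _ _
  have hΔ : ∀ s : ℝ, R ≤ s → ‖x (s + ω) - x s‖ ≤ ε' := by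
    intro s hs
    have := hR₀ s ((le_max_left _ _).trans hs)
    rw [Real.dist_eq, sub_zero, abs_of_nonneg (norm_nonneg _)] at this
    exact this.le
  have e1 : ∀ᶠ t in atTop, g t * B * ω < ε / 3 := by
    have : Tendsto (fun t => g t * B * ω) atTop (nhds 0) := by
      simpa using (hg0.mul_const B).mul_const ω
    exact this.eventually_lt_const (by positivity)
  have e2 : ∀ᶠ t in atTop, g (t - R) * (2 * B) * R < ε / 3 := by
    have hsub : Tendsto (fun t : ℝ => t - R) atTop atTop :=
      (tendsto_atTop_add_const_right atTop (-R) tendsto_id).congr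
        (fun t => (sub_eq_add_neg t R).symm)
    have hgR : Tendsto (fun t : ℝ => g (t - R)) atTop (nhds 0) := hg0.comp hsub
    have : Tendsto (fun t => g (t - R) * (2 * B) * R) atTop (nhds 0) := by
      simpa using (hgR.mul_const (2 * B)).mul_const R
    exact this.eventually_lt_const (by positivity)
  filter_upwards [e1, e2, eventually_ge_atTop R, eventually_ge_atTop 0] with t h1 h2 htR ht0
  -- interval integrabilities at this t
  have i1 : IntervalIntegrable (fun u => T (t - u) • x (u + ω)) volume (-ω) 0 := by
    apply hii t _ _ B _ hxω (fun s => hB (s + ω))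
    intro s hs
    rw [Set.uIoc_of_le (by linarith)] at hs
    linarith [hs.2]
  have i2 : IntervalIntegrable (fun u => T (t - u) • x (u + ω)) volume 0 t := by
    apply hii t _ _ B _ hxω (fun s => hB (s + ω))
    intro s hs
    rw [Set.uIoc_of_le ht0] at hs
    linarith [hs.2]
  have i3 : IntervalIntegrable (fun u => T (t - u) • x u) volume 0 t := by
    apply hii t _ _ B _ hxc hB
    intro s hs
    rw [Set.uIoc_of_le ht0] at hs
    linarith [hs.2]
  set Δ : ℝ → E := fun s => x (s + ω) - x s with hΔdef
  have hΔc : Continuous Δ := hxω.sub hxc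
  have hΔB : ∀ s, ‖Δ s‖ ≤ B + B := fun s =>
    (norm_sub_le _ _).trans (add_le_add (hB _) (hB _))
  have i4 : IntervalIntegrable (fun s => T (t - s) • Δ s) volume 0 R := by
    apply hii t _ _ (B + B) _ hΔc hΔB
    intro s hs
    rw [Set.uIoc_of_le hR0] at hs
    linarith [hs.2]
  have i5 : IntervalIntegrable (fun s => T (t - s) • Δ s) volume R t := by
    apply hii t _ _ (B + B) _ hΔc hΔB
    intro s hs
    rw [Set.uIoc_of_le htR] at hs
    linarith [hs.2]
  -- the decomposition identity
  have hshift : (∫ s in (0:ℝ)..(t + ω), T (t + ω - s) • x s)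
      = ∫ u in (-ω)..t, T (t - u) • x (u + ω) := by
    have h := intervalIntegral.integral_comp_sub_right (a := 0) (b := t + ω)
      (fun u => T (t - u) • x (u + ω)) ω
    rw [show (0:ℝ) - ω = -ω by ring, show t + ω - ω = t by ring] at h
    rw [← h]
    apply intervalIntegral.integral_congr
    intro s _
    simp only
    rw [show t - (s - ω) = t + ω - s by ring, show s - ω + ω = s by ring]
  have hsplit1 : (∫ u in (-ω)..(0:ℝ), T (t - u) • x (u + ω))
      + (∫ u in (0:ℝ)..t, T (t - u) • x (u + ω)) = ∫ u in (-ω)..t, T (t - u) • x (u + ω) :=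
    intervalIntegral.integral_add_adjacent_intervals i1 i2
  have hsub : (∫ s in (0:ℝ)..t, T (t - s) • Δ s)
      = (∫ u in (0:ℝ)..t, T (t - u) • x (u + ω)) - ∫ s in (0:ℝ)..t, T (t - s) • x s := by
    rw [← intervalIntegral.integral_sub i2 i3]
    apply intervalIntegral.integral_congr
    intro s _
    simp only [hΔdef, smul_sub]
  have hsplit2 : (∫ s in (0:ℝ)..R, T (t - s) • Δ s) + (∫ s in R..t, T (t - s) • Δ s)
      = ∫ s in (0:ℝ)..t, T (t - s) • Δ s :=
    intervalIntegral.integral_add_adjacent_intervals i4 i5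
  have hid : (∫ s in (0:ℝ)..(t + ω), T (t + ω - s) • x s) - ∫ s in (0:ℝ)..t, T (t - s) • x s
      = (∫ u in (-ω)..(0:ℝ), T (t - u) • x (u + ω))
        + ((∫ s in (0:ℝ)..R, T (t - s) • Δ s) + (∫ s in R..t, T (t - s) • Δ s)) := by
    rw [hshift, ← hsplit1, hsplit2, hsub]
    abel
  -- bounds
  have hA : ‖∫ u in (-ω)..(0:ℝ), T (t - u) • x (u + ω)‖ ≤ g t * B * ω := by
    have h := intervalIntegral.norm_integral_le_of_norm_le_const
      (a := -ω) (b := 0) (C := g t * B) (f := fun u => T (t - u) • x (u + ω)) ?_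
    · calc ‖∫ u in (-ω)..(0:ℝ), T (t - u) • x (u + ω)‖ ≤ g t * B * |0 - (-ω)| := h
        _ = g t * B * ω := by rw [show (0:ℝ) - (-ω) = ω by ring, abs_of_pos hω]
    · intro u hu
      rw [Set.uIoc_of_le (by linarith)] at hu
      rw [norm_smul, Real.norm_eq_abs]
      have h1 : |T (t - u)| ≤ g (t - u) := hT _ (by linarith [hu.2])
      have h2 : g (t - u) ≤ g t := hg_anti t (t - u) ht0 (by linarith [hu.2])
      exact mul_le_mul (h1.trans h2) (hB _) (norm_nonneg _) (hg_nonneg t ht0)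
  have hB1 : ‖∫ s in (0:ℝ)..R, T (t - s) • Δ s‖ ≤ g (t - R) * (2 * B) * R := by
    have h := intervalIntegral.norm_integral_le_of_norm_le_const
      (a := 0) (b := R) (C := g (t - R) * (2 * B)) (f := fun s => T (t - s) • Δ s) ?_
    · calc ‖∫ s in (0:ℝ)..R, T (t - s) • Δ s‖ ≤ g (t - R) * (2 * B) * |R - 0| := h
        _ = g (t - R) * (2 * B) * R := by rw [sub_zero, abs_of_nonneg hR0]
    · intro s hs
      rw [Set.uIoc_of_le hR0] at hs
      rw [norm_smul, Real.norm_eq_abs]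
      have h1 : |T (t - s)| ≤ g (t - s) := hT _ (by linarith [hs.2])
      have h2 : g (t - s) ≤ g (t - R) := hg_anti (t - R) (t - s) (by linarith) (by linarith [hs.2])
      have h3 : ‖Δ s‖ ≤ 2 * B := by have := hΔB s; linarith
      exact mul_le_mul (h1.trans h2) h3 (norm_nonneg _)
        (hg_nonneg (t - R) (by linarith))
  have hC2 : ‖∫ s in R..t, T (t - s) • Δ s‖ ≤ ε' * I := by
    have hb : IntervalIntegrable (fun s => |T (t - s)| * ε') volume R t := by
      rw [intervalIntegrable_iff]
      apply Measure.integrableOn_of_bounded (M := K * ε') measure_Ioc_lt_top.ne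
      · exact (((hTmeas.comp (measurable_const.sub measurable_id)).abs.mul_const
          ε').aestronglyMeasurable)
      · filter_upwards [ae_restrict_mem measurableSet_uIoc] with s hs
        have hst : s ≤ t := le_trans hs.2 (sup_le htR le_rfl)
        rw [Real.norm_eq_abs, abs_mul, abs_abs, abs_of_pos hε']
        exact mul_le_mul_of_nonneg_right (hTK _ (by linarith)) hε'.le
    have h := intervalIntegral.norm_integral_le_abs_of_norm_le (μ := volume)
      (f := fun s => T (t - s) • Δ s) (g := fun s => |T (t - s)| * ε') (a := R) (b := t) ?_ hb
    · have hval : (∫ s in R..t, |T (t - s)| * ε') ≤ I * ε' := by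
        rw [intervalIntegral.integral_mul_const]
        apply mul_le_mul_of_nonneg_right _ hε'.le
        have hcomp : (∫ s in R..t, |T (t - s)|) = ∫ u in (0:ℝ)..(t - R), |T u| := by
          have h2 := intervalIntegral.integral_comp_sub_left (a := R) (b := t)
            (fun u => |T u|) t
          rw [show t - t = (0:ℝ) by ring] at h2
          exact h2
        rw [hcomp]
        exact hIle (t - R) (by linarith)
      have hnn : (0:ℝ) ≤ ∫ s in R..t, |T (t - s)| * ε' :=
        intervalIntegral.integral_nonneg htR (fun s _ => by positivity)
      calc ‖∫ s in R..t, T (t - s) • Δ s‖ ≤ |∫ s in R..t, |T (t - s)| * ε'| := h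
        _ = ∫ s in R..t, |T (t - s)| * ε' := abs_of_nonneg hnn
        _ ≤ I * ε' := hval
        _ = ε' * I := mul_comm _ _
    · filter_upwards [ae_restrict_mem measurableSet_uIoc] with s hs
      rw [Set.uIoc_of_le htR] at hs
      rw [norm_smul, Real.norm_eq_abs]
      exact mul_le_mul_of_nonneg_left (hΔ s hs.1.le) (abs_nonneg _)
  have hεI : ε' * I < ε / 3 := by
    have h1 : ε' * I < ε' * (I + 1) := by
      apply mul_lt_mul_of_pos_left (lt_add_one I) hε'
    have h2 : ε' * (I + 1) = ε / 3 := by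
      rw [hε'def]
      field_simp
    linarith
  rw [hid]
  calc ‖(∫ u in (-ω)..(0:ℝ), T (t - u) • x (u + ω))
        + ((∫ s in (0:ℝ)..R, T (t - s) • Δ s) + (∫ s in R..t, T (t - s) • Δ s))‖
      ≤ ‖∫ u in (-ω)..(0:ℝ), T (t - u) • x (u + ω)‖
        + (‖∫ s in (0:ℝ)..R, T (t - s) • Δ s‖ + ‖∫ s in R..t, T (t - s) • Δ s‖) :=
        (norm_add_le _ _).trans (by gcongr; exact norm_add_le _ _)
    _ < ε / 3 + (ε / 3 + ε / 3) :=
        add_lt_add (lt_of_le_of_lt hA h1)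
          (add_lt_add (lt_of_le_of_lt hB1 h2) (lt_of_le_of_lt hC2 hεI))
    _ = ε := by ring
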